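/- Let Ω ⊂ ℝ^N be bounded and open, u ∈ L¹(Ω) with u ≥ 0, and suppose u is extended to Ω^c by the Neumann condition N_s u = 0, i.e., u(x) = (∫_Ω u(y)|x−y|^{−(N+2s)} dy) / (∫_Ω |x−y|^{−(N+2s)} dy) for x ∈ Ω^c. Then for any sequence x_j ∈ Ω^c with |x_j| → ∞, u(x_j) → (1/|Ω|) ∫_Ω u(y) dy. -/

import Mathlib

open MeasureTheory Metric Filter

theorem stmt10 (N : ℕ) (hN : 0 < N) (s : ℝ) (hs0 : 0 < s) (hs1 : s < 1)
    (Ω : Set (EuclideanSpace ℝ (Fin N))) (hΩo : IsOpen Ω)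
    (hΩb : Bornology.IsBounded Ω) (hΩne : Ω.Nonempty)
    (u : EuclideanSpace ℝ (Fin N) → ℝ) (hu : IntegrableOn u Ω volume)
    (hpos : ∀ y, 0 ≤ u y)
    (hext : ∀ x ∈ Ωᶜ, u x =
      (∫ y in Ω, u y * ‖x - y‖ ^ (-((N : ℝ) + 2 * s))) /
        ∫ y in Ω, ‖x - y‖ ^ (-((N : ℝ) + 2 * s)))
    (x : ℕ → EuclideanSpace ℝ (Fin N)) (hx : ∀ j, x j ∈ Ωᶜ)
    (hnorm : Filter.Tendsto (fun j => ‖x j‖) Filter.atTop Filter.atTop) :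
    Filter.Tendsto (fun j => u (x j)) Filter.atTop
      (nhds ((volume Ω).toReal⁻¹ * ∫ y in Ω, u y)) := by
  set α : ℝ := (N : ℝ) + 2 * s with hα_def
  have hα : 0 < α := by positivity
  obtain ⟨R, hR⟩ := hΩb.subset_closedBall 0
  have hRmem : ∀ y ∈ Ω, ‖y‖ ≤ R := fun y hy => by
    simpa [mem_closedBall, dist_zero_right] using hR hy
  have hμfin : volume Ω < ⊤ := hΩb.measure_lt_top
  have hμpos : 0 < (volume Ω).toReal :=
    ENNReal.toReal_pos (hΩo.measure_pos volume hΩne).ne' hμfin.ne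
  -- pointwise convergence of the weight
  have hpt : ∀ y ∈ Ω, Tendsto (fun j => ‖x j‖ ^ α * ‖x j - y‖ ^ (-α)) atTop (nhds 1) := by
    intro y hy
    have h0 : Tendsto (fun j => ‖y‖ * ‖x j‖⁻¹) atTop (nhds 0) := by
      simpa using hnorm.inv_tendsto_atTop.const_mul ‖y‖
    have ht : Tendsto (fun j => ‖x j - y‖ / ‖x j‖) atTop (nhds 1) := by
      have h1 : Tendsto (fun j => 1 - ‖y‖ * ‖x j‖⁻¹) atTop (nhds 1) := by
        simpa using tendsto_const_nhds.sub h0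
      have h2 : Tendsto (fun j => 1 + ‖y‖ * ‖x j‖⁻¹) atTop (nhds 1) := by
        simpa using tendsto_const_nhds.add h0
      refine tendsto_of_tendsto_of_tendsto_of_le_of_le' h1 h2 ?_ ?_
      · filter_upwards [hnorm.eventually_ge_atTop 1] with j hj
        have hxj : (0:ℝ) < ‖x j‖ := lt_of_lt_of_le one_pos hj
        have hlb : ‖x j‖ - ‖y‖ ≤ ‖x j - y‖ := by
          have := norm_sub_norm_le (x j) y
          linarith [abs_le.mp (abs_norm_sub_norm_le (x j) y)]
        have : (‖x j‖ - ‖y‖) / ‖x j‖ ≤ ‖x j - y‖ / ‖x j‖ :=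
          div_le_div_of_nonneg_right hlb hxj.le
        calc 1 - ‖y‖ * ‖x j‖⁻¹ = (‖x j‖ - ‖y‖) / ‖x j‖ := by field_simp
          _ ≤ ‖x j - y‖ / ‖x j‖ := this
      · filter_upwards [hnorm.eventually_ge_atTop 1] with j hj
        have hxj : (0:ℝ) < ‖x j‖ := lt_of_lt_of_le one_pos hj
        have hub : ‖x j - y‖ ≤ ‖x j‖ + ‖y‖ := norm_sub_le _ _
        calc ‖x j - y‖ / ‖x j‖ ≤ (‖x j‖ + ‖y‖) / ‖x j‖ := by
              exact div_le_div_of_nonneg_right hub hxj.le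
          _ = 1 + ‖y‖ * ‖x j‖⁻¹ := by field_simp
    have hxy : ∀ j, (0:ℝ) < ‖x j - y‖ := by
      intro j
      have : x j ≠ y := fun h => (hx j) (h ▸ hy)
      simpa [sub_eq_zero] using norm_pos_iff.mpr (sub_ne_zero.mpr this)
    have hmain : Tendsto (fun j => (‖x j - y‖ / ‖x j‖) ^ (-α)) atTop (nhds 1) := by
      have := ht.rpow_const (p := -α) (Or.inl one_ne_zero)
      simpa using this
    refine hmain.congr' ?_
    filter_upwards [hnorm.eventually_ge_atTop 1] with j hj
    have hxj : (0:ℝ) < ‖x j‖ := lt_of_lt_of_le one_pos hj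
    have ha : (‖x j - y‖ : ℝ) ^ α ≠ 0 := (Real.rpow_pos_of_pos (hxy j) α).ne'
    have hb : (‖x j‖ : ℝ) ^ α ≠ 0 := (Real.rpow_pos_of_pos hxj α).ne'
    rw [Real.div_rpow (hxy j).le hxj.le, Real.rpow_neg hxj.le, Real.rpow_neg (hxy j).le]
    field_simp
  -- uniform bound
  have hbd : ∀ j, max (2 * R) 1 ≤ ‖x j‖ → ∀ y ∈ Ω,
      ‖x j‖ ^ α * ‖x j - y‖ ^ (-α) ≤ 2 ^ α := by
    intro j hj y hy
    have hxj : (0:ℝ) < ‖x j‖ := lt_of_lt_of_le (by simp [lt_max_iff]) hj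
    have h2R : 2 * R ≤ ‖x j‖ := le_trans (le_max_left _ _) hj
    have hlb : ‖x j‖ / 2 ≤ ‖x j - y‖ := by
      have := abs_le.mp (abs_norm_sub_norm_le (x j) y)
      have hyR := hRmem y hy
      linarith
    have h1 : ‖x j - y‖ ^ (-α) ≤ (‖x j‖ / 2) ^ (-α) :=
      Real.rpow_le_rpow_of_nonpos (by positivity) hlb (neg_nonpos.mpr hα.le)
    have h2 : ‖x j‖ ^ α * (‖x j‖ / 2) ^ (-α) = 2 ^ α := by
      rw [Real.div_rpow hxj.le (by norm_num : (0:ℝ) ≤ 2), Real.rpow_neg hxj.le,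
        Real.rpow_neg (by norm_num : (0:ℝ) ≤ 2)]
      field_simp
    calc ‖x j‖ ^ α * ‖x j - y‖ ^ (-α) ≤ ‖x j‖ ^ α * (‖x j‖ / 2) ^ (-α) := by
          exact mul_le_mul_of_nonneg_left h1 (Real.rpow_nonneg hxj.le α)
      _ = 2 ^ α := h2
  have hev : ∀ᶠ j in atTop, max (2 * R) 1 ≤ ‖x j‖ := hnorm.eventually_ge_atTop _
  -- measurability of weights
  have hmeas : ∀ j, AEStronglyMeasurable (fun y : EuclideanSpace ℝ (Fin N) =>
      ‖x j‖ ^ α * ‖x j - y‖ ^ (-α)) (volume.restrict Ω) := by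
    intro j
    have hcont : ContinuousOn (fun y : EuclideanSpace ℝ (Fin N) => ‖x j‖ ^ α * ‖x j - y‖ ^ (-α)) Ω := by
      refine ContinuousOn.mul continuousOn_const (ContinuousOn.rpow_const ?_ ?_)
      · exact ((continuous_const.sub continuous_id).norm).continuousOn
      · intro y hy
        left
        have : x j ≠ y := fun h => (hx j) (h ▸ hy)
        simpa using sub_ne_zero.mpr this
    exact hcont.aestronglyMeasurable hΩo.measurableSet
  -- numerator convergence
  have hnum : Tendsto (fun j => ∫ y in Ω, u y * (‖x j‖ ^ α * ‖x j - y‖ ^ (-α))) atTop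
      (nhds (∫ y in Ω, u y)) := by
    apply tendsto_integral_filter_of_dominated_convergence (fun y => 2 ^ α * u y)
    · exact Filter.Eventually.of_forall fun j => hu.1.mul (hmeas j)
    · filter_upwards [hev] with j hj
      filter_upwards [ae_restrict_mem hΩo.measurableSet] with y hy
      have h1 := hbd j hj y hy
      have h2 : (0:ℝ) ≤ ‖x j‖ ^ α * ‖x j - y‖ ^ (-α) := by positivity
      rw [norm_mul, Real.norm_of_nonneg (hpos y), Real.norm_of_nonneg h2, mul_comm]
      exact mul_le_mul_of_nonneg_right h1 (hpos y)
    · exact hu.const_mul _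
    · filter_upwards [ae_restrict_mem hΩo.measurableSet] with y hy
      simpa using tendsto_const_nhds.mul (hpt y hy)
  -- denominator convergence
  have hden : Tendsto (fun j => ∫ y in Ω, ‖x j‖ ^ α * ‖x j - y‖ ^ (-α)) atTop
      (nhds ((volume Ω).toReal)) := by
    have : ((volume Ω).toReal) = ∫ y in Ω, (1:ℝ) := by
      simp [Measure.restrict_apply_univ, Measure.real]
    rw [this]
    apply tendsto_integral_filter_of_dominated_convergence (fun _ => 2 ^ α)
    · exact Filter.Eventually.of_forall fun j => hmeas j
    · filter_upwards [hev] with j hj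
      filter_upwards [ae_restrict_mem hΩo.measurableSet] with y hy
      have h2 : (0:ℝ) ≤ ‖x j‖ ^ α * ‖x j - y‖ ^ (-α) := by positivity
      rw [Real.norm_of_nonneg h2]
      exact hbd j hj y hy
    · exact integrableOn_const hμfin.ne
    · filter_upwards [ae_restrict_mem hΩo.measurableSet] with y hy
      exact hpt y hy
  -- combine
  have hlim : Tendsto (fun j =>
      (∫ y in Ω, u y * (‖x j‖ ^ α * ‖x j - y‖ ^ (-α))) /
        ∫ y in Ω, ‖x j‖ ^ α * ‖x j - y‖ ^ (-α)) atTop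
      (nhds ((∫ y in Ω, u y) / (volume Ω).toReal)) :=
    hnum.div hden hμpos.ne'
  rw [div_eq_inv_mul] at hlim
  refine hlim.congr' ?_
  filter_upwards [hev] with j hj
  have hxj : (0:ℝ) < ‖x j‖ := lt_of_lt_of_le (by simp [lt_max_iff]) hj
  have hc : (0:ℝ) < ‖x j‖ ^ α := Real.rpow_pos_of_pos hxj α
  rw [hext (x j) (hx j)]
  have e1 : (∫ y in Ω, u y * (‖x j‖ ^ α * ‖x j - y‖ ^ (-α)))
      = ‖x j‖ ^ α * ∫ y in Ω, u y * ‖x j - y‖ ^ (-α) := by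
    rw [← integral_const_mul]
    exact integral_congr_ae (Filter.Eventually.of_forall fun y => by ring)
  have e2 : (∫ y in Ω, ‖x j‖ ^ α * ‖x j - y‖ ^ (-α))
      = ‖x j‖ ^ α * ∫ y in Ω, ‖x j - y‖ ^ (-α) := integral_const_mul _ _
  rw [e1, e2, mul_div_mul_left _ _ hc.ne']
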